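/- Explicit 2^{O(k²)} bound for the competitive-ratio recurrence: Let k ≥ 1 and let n₁,…,n_k be natural numbers with 1 ≤ n_ℓ ≤ 2^{ℓ³·2^ℓ} for every ℓ ∈ {1,…,k}. Define c_k = H(n_k) + 1 and, for 1 ≤ ℓ < k, c_ℓ = (H(n_ℓ) + 1)·(c_{ℓ+1} + 1). Then c₁ ≤ 2^{8k²}. -/

import Mathlib

/-- `H n = 1 + 1/2 + ⋯ + 1/n`, the `n`-th harmonic number. -/
noncomputable def H (n : ℕ) : ℝ := ∑ i ∈ Finset.Icc 1 n, (1 : ℝ) / i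

lemma H_eq (n : ℕ) : H n = (harmonic n : ℝ) := by
  simp [H, harmonic_eq_sum_Icc, one_div]

lemma H_nonneg (n : ℕ) : 0 ≤ H n := by
  apply Finset.sum_nonneg; intro i _; positivity

lemma H_le_log (n : ℕ) : H n ≤ 1 + Real.log n := by
  rw [H_eq]; exact harmonic_le_one_add_log n

lemma key (ℓ k m : ℕ) (h1 : 1 ≤ ℓ) (hlk : ℓ ≤ k) (hm : m ≤ 2 ^ (ℓ ^ 3 * 2 ^ ℓ)) :
    H m + 1 ≤ 2 ^ (4 * k + 1) := by
  have hlog2 : Real.log 2 ≤ 1 := by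
    have := Real.log_le_sub_one_of_pos (x := 2) (by norm_num); linarith
  have h2 : Real.log m ≤ (ℓ ^ 3 * 2 ^ ℓ : ℕ) := by
    calc Real.log m ≤ Real.log ((2:ℝ) ^ (ℓ ^ 3 * 2 ^ ℓ)) := by
          rcases Nat.eq_zero_or_pos m with h0 | h0
          · simp only [h0, Nat.cast_zero, Real.log_zero]
            exact Real.log_nonneg (by apply one_le_pow₀; norm_num)
          · exact Real.log_le_log (by exact_mod_cast h0) (by exact_mod_cast hm)
      _ = (ℓ ^ 3 * 2 ^ ℓ : ℕ) * Real.log 2 := by rw [Real.log_pow]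
      _ ≤ (ℓ ^ 3 * 2 ^ ℓ : ℕ) * 1 := by
          apply mul_le_mul_of_nonneg_left hlog2; positivity
      _ = _ := by ring
  have hnat : 2 + ℓ ^ 3 * 2 ^ ℓ ≤ 2 ^ (4 * ℓ + 1) := by
    have h3 : ℓ ^ 3 ≤ 2 ^ (3 * ℓ) := by
      calc ℓ ^ 3 ≤ (2 ^ ℓ) ^ 3 := Nat.pow_le_pow_left (Nat.le_of_lt (Nat.lt_two_pow_self (n := ℓ))) 3
        _ = 2 ^ (3 * ℓ) := by rw [← pow_mul, mul_comm]
    have h4 : ℓ ^ 3 * 2 ^ ℓ ≤ 2 ^ (4 * ℓ) := by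
      calc ℓ ^ 3 * 2 ^ ℓ ≤ 2 ^ (3 * ℓ) * 2 ^ ℓ := Nat.mul_le_mul_right _ h3
        _ = 2 ^ (4 * ℓ) := by rw [← pow_add]; ring_nf
    have h5 : 2 ≤ 2 ^ (4 * ℓ) := by
      calc 2 = 2 ^ 1 := rfl
        _ ≤ 2 ^ (4 * ℓ) := Nat.pow_le_pow_right (by norm_num) (by omega)
    calc 2 + ℓ ^ 3 * 2 ^ ℓ ≤ 2 ^ (4 * ℓ) + 2 ^ (4 * ℓ) := Nat.add_le_add h5 h4
      _ = 2 ^ (4 * ℓ + 1) := by ring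
  have hmono : (2:ℝ) ^ (4 * ℓ + 1) ≤ 2 ^ (4 * k + 1) := by
    apply pow_le_pow_right₀ (by norm_num); omega
  have := H_le_log m
  calc H m + 1 ≤ 2 + Real.log m := by linarith
    _ ≤ 2 + (ℓ ^ 3 * 2 ^ ℓ : ℕ) := by linarith
    _ = ((2 + ℓ ^ 3 * 2 ^ ℓ : ℕ) : ℝ) := by push_cast; ring
    _ ≤ ((2 ^ (4 * ℓ + 1) : ℕ) : ℝ) := by exact_mod_cast hnat
    _ = (2:ℝ) ^ (4 * ℓ + 1) := by push_cast; ring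
    _ ≤ _ := hmono

theorem explicit_competitive_ratio_bound (k : ℕ) (hk : 1 ≤ k) (n : ℕ → ℕ)
    (hn1 : ∀ ℓ, 1 ≤ ℓ → ℓ ≤ k → 1 ≤ n ℓ)
    (hn2 : ∀ ℓ, 1 ≤ ℓ → ℓ ≤ k → n ℓ ≤ 2 ^ (ℓ ^ 3 * 2 ^ ℓ))
    (c : ℕ → ℝ)
    (hck : c k = H (n k) + 1)
    (hrec : ∀ ℓ, 1 ≤ ℓ → ℓ < k → c ℓ = (H (n ℓ) + 1) * (c (ℓ + 1) + 1)) :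
    c 1 ≤ 2 ^ (8 * k ^ 2) := by
  have main : ∀ d ℓ, 1 ≤ ℓ → ℓ + d = k →
      1 ≤ c ℓ ∧ c ℓ ≤ 2 ^ ((4 * k + 1) + d * (4 * k + 3)) := by
    intro d
    induction d with
    | zero =>
      intro ℓ h1 hlk
      have hℓ : ℓ = k := by omega
      subst hℓ
      rw [hck]
      constructor
      · have := H_nonneg (n ℓ); linarith
      · simpa using key ℓ ℓ (n ℓ) h1 le_rfl (hn2 ℓ h1 le_rfl)
    | succ d ih =>
      intro ℓ h1 hlk
      have hlt : ℓ < k := by omega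
      obtain ⟨ih1, ih2⟩ := ih (ℓ + 1) (by omega) (by omega)
      have hkey : H (n ℓ) + 1 ≤ 2 ^ (4 * k + 1) :=
        key ℓ k (n ℓ) h1 (le_of_lt hlt) (hn2 ℓ h1 (le_of_lt hlt))
      have hH : (1:ℝ) ≤ H (n ℓ) + 1 := by have := H_nonneg (n ℓ); linarith
      rw [hrec ℓ h1 hlt]
      constructor
      · nlinarith
      · have h6 : c (ℓ + 1) + 1 ≤ 2 ^ ((4 * k + 1) + d * (4 * k + 3) + 1) := by
          rw [pow_succ]
          nlinarith [pow_pos (by norm_num : (0:ℝ) < 2) ((4 * k + 1) + d * (4 * k + 3))]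
        calc (H (n ℓ) + 1) * (c (ℓ + 1) + 1)
            ≤ 2 ^ (4 * k + 1) * 2 ^ ((4 * k + 1) + d * (4 * k + 3) + 1) := by
              apply mul_le_mul hkey h6 (by linarith) (by positivity)
          _ = 2 ^ ((4 * k + 1) + (4 * k + 1) + d * (4 * k + 3) + 1) := by
              rw [← pow_add]; ring_nf
          _ ≤ 2 ^ ((4 * k + 1) + (d + 1) * (4 * k + 3)) := by
              apply pow_le_pow_right₀ (by norm_num); ring_nf; omega
  obtain ⟨-, h⟩ := main (k - 1) 1 le_rfl (by omega)
  refine h.trans (pow_le_pow_right₀ (by norm_num) ?_)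
  obtain ⟨j, rfl⟩ : ∃ j, k = j + 1 := ⟨k - 1, by omega⟩
  simp only [Nat.add_sub_cancel]
  nlinarith [sq_nonneg j]
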